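/- Let μ be a probability measure on ℝ with μ((0,∞)) = 1, let M(t) = ∫ exp(t·ε) dμ(ε), and let γ > 0 and Δq > 0 be such that M(Δq) < ∞. Then M(−γ) ≥ (M(Δq))^{−γ/Δq}. Equivalently, the usefulness 1 − M(−γ) of a Randomized DP Laplace mechanism whose privacy budget is set to ε₀ = ln ∫ exp(Δq·ε) dμ(ε) (the logarithm of the average of e^{ε(b)} where ε(b) = Δq·ε are the per-parameter privacy leakages) is upper bounded by the usefulness 1 − exp(−γ·ε₀/Δq) of the baseline ε₀-differentially private Laplace mechanism with scale Δq/ε₀. -/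

import Mathlib

open MeasureTheory Real

lemma convexOn_rpow_neg {q : ℝ} (hq : q ≤ 0) :
    ConvexOn ℝ (Set.Ici (1 : ℝ)) fun x : ℝ => x ^ q := by
  have hint : interior (Set.Ici (1 : ℝ)) = Set.Ioi 1 := interior_Ici
  refine convexOn_of_hasDerivWithinAt2_nonneg (convex_Ici 1)
    (f' := fun x => q * x ^ (q - 1)) (f'' := fun x => q * ((q - 1) * x ^ (q - 1 - 1)))
    ?_ ?_ ?_ ?_
  · intro x hx
    exact (Real.continuousAt_rpow_const x q
      (Or.inl (lt_of_lt_of_le one_pos hx).ne')).continuousWithinAt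
  · intro x hx
    rw [hint] at hx
    have hx0 : x ≠ 0 := by
      have : (1:ℝ) < x := hx
      linarith
    exact (Real.hasDerivAt_rpow_const (Or.inl hx0)).hasDerivWithinAt
  · intro x hx
    rw [hint] at hx
    have hx0 : x ≠ 0 := by
      have : (1:ℝ) < x := hx
      linarith
    exact ((Real.hasDerivAt_rpow_const (p := q - 1) (Or.inl hx0)).const_mul q).hasDerivWithinAt
  · intro x hx
    rw [hint] at hx
    have hx0 : (0:ℝ) < x := lt_trans one_pos hx
    have h1 : (0:ℝ) < x ^ (q - 1 - 1) := Real.rpow_pos_of_pos hx0 _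
    have h2 : (q - 1) * x ^ (q - 1 - 1) ≤ 0 :=
      mul_nonpos_of_nonpos_of_nonneg (by linarith) h1.le
    show 0 ≤ q * ((q - 1) * x ^ (q - 1 - 1))
    nlinarith [mul_nonneg (neg_nonneg.2 hq) (neg_nonneg.2 h2)]

/-- If the privacy budget of a Randomized DP Laplace mechanism is set to
`ε₀ = ln ∫ exp(Δq·ε) dμ(ε)` (the log-average of the per-parameter privacy leakages
`e^{Δq·ε}`), then its usefulness `1 − M(−γ)` is upper bounded by the usefulness
`1 − exp(−γ·ε₀/Δq) = 1 − (M(Δq))^{−γ/Δq}` of the baseline `ε₀`-DP Laplace mechanism;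
equivalently `M(−γ) ≥ (M(Δq))^{−γ/Δq}`. -/
theorem mixture_laplace_mgf_lower_bound
    (μ : Measure ℝ) [IsProbabilityMeasure μ] (hμ : μ (Set.Ioi 0) = 1)
    (M : ℝ → ℝ)
    (hM : ∀ t : ℝ, M t = ∫ ε, Real.exp (t * ε) ∂μ)
    (γ Δq : ℝ) (hγ : 0 < γ) (hΔq : 0 < Δq)
    (hMfin : Integrable (fun ε : ℝ => Real.exp (Δq * ε)) μ) :
    M Δq ^ (-(γ / Δq)) ≤ M (-γ) := by
  set q : ℝ := -(γ / Δq) with hqdef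
  have hq0 : q < 0 := by
    have : 0 < γ / Δq := div_pos hγ hΔq
    simpa [hqdef] using neg_neg_iff_pos.mpr this
  have hqΔ : q * Δq = -γ := by
    rw [hqdef]; field_simp [hΔq.ne']
  -- a.e. ε > 0
  have hae : ∀ᵐ ε ∂μ, ε ∈ Set.Ioi (0:ℝ) := by
    rw [ae_iff]
    have : {ε : ℝ | ¬ ε ∈ Set.Ioi (0:ℝ)} = (Set.Ioi (0:ℝ))ᶜ := rfl
    rw [this, measure_compl measurableSet_Ioi (measure_ne_top μ _), hμ, measure_univ]
    simp
  have hfs : ∀ᵐ ε ∂μ, Real.exp (Δq * ε) ∈ Set.Ici (1:ℝ) := by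
    filter_upwards [hae] with ε hε
    have : (0:ℝ) ≤ Δq * ε := le_of_lt (mul_pos hΔq hε)
    simpa using Real.one_le_exp this
  -- the composed function equals exp(-γ ε)
  have hcomp : ∀ ε : ℝ, Real.exp (Δq * ε) ^ q = Real.exp (-γ * ε) := by
    intro ε
    rw [← Real.exp_mul]
    congr 1
    rw [show Δq * ε * q = q * Δq * ε by ring, hqΔ]
  have hgi : Integrable (fun ε : ℝ => Real.exp (Δq * ε) ^ q) μ := by
    refine Integrable.mono' (integrable_const (1:ℝ)) ?_ ?_
    · exact ((Real.continuous_exp.comp (continuous_const.mul continuous_id)).rpow_const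
        (fun x => Or.inl (Real.exp_pos _).ne')).aestronglyMeasurable
    · filter_upwards [hae] with ε hε
      rw [hcomp ε]
      rw [Real.norm_eq_abs, abs_of_pos (Real.exp_pos _)]
      have : -γ * ε ≤ 0 := by
        have : (0:ℝ) < ε := hε
        nlinarith
      exact Real.exp_le_one_iff.mpr this
  have hjensen := (convexOn_rpow_neg hq0.le).map_integral_le
    (g := fun x : ℝ => x ^ q) (f := fun ε : ℝ => Real.exp (Δq * ε))
    (fun x hx => (Real.continuousAt_rpow_const x q
      (Or.inl (by have : (1:ℝ) ≤ x := hx; positivity : (0:ℝ) < x).ne')).continuousWithinAt)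
    isClosed_Ici hfs hMfin (by exact hgi)
  calc M Δq ^ q = (∫ ε, Real.exp (Δq * ε) ∂μ) ^ q := by rw [hM]
    _ ≤ ∫ ε, Real.exp (Δq * ε) ^ q ∂μ := hjensen
    _ = ∫ ε, Real.exp (-γ * ε) ∂μ := by
        exact integral_congr_ae (Filter.Eventually.of_forall (fun ε => hcomp ε))
    _ = M (-γ) := (hM (-γ)).symm
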